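/- Let g : [0,∞) → ℝ be a monotonically increasing concave function with g(0) = 0 and g(1) = 1 (hence g is non-negative on [0,∞)). Let A and B be n×n positive semidefinite complex matrices with B ≤ I ≤ A (i.e., I − B and A − I are positive semidefinite). Then for every index k, λ_k↓(g(A) − B) ≤ λ_k↓(g(A − B)). -/

import Mathlib

open Matrix
open scoped ComplexOrder

/-- The eigenvalues of a square matrix, sorted in non-increasing order
(junk value `0` if the matrix is not Hermitian). -/
noncomputable def eigValsDown {𝕜 : Type*} [RCLike 𝕜] {n : ℕ}
    (A : Matrix (Fin n) (Fin n) 𝕜) : Fin n → ℝ :=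
  if hA : A.IsHermitian then
    fun k => (hA.eigenvalues ∘ Tuple.sort hA.eigenvalues) k.rev
  else 0

/-- Functional calculus: apply a real function to a Hermitian matrix via its spectral
decomposition (junk value `0` if the matrix is not Hermitian). -/
noncomputable def matFun {𝕜 : Type*} [RCLike 𝕜] {n : ℕ} (h : ℝ → ℝ)
    (A : Matrix (Fin n) (Fin n) 𝕜) : Matrix (Fin n) (Fin n) 𝕜 :=
  if hA : A.IsHermitian then
    (hA.eigenvectorUnitary : Matrix (Fin n) (Fin n) 𝕜) *
      Matrix.diagonal (fun i => (h (hA.eigenvalues i) : 𝕜)) *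
      star (hA.eigenvectorUnitary : Matrix (Fin n) (Fin n) 𝕜)
  else 0

/-- The operator norm (largest singular value) of a matrix. -/
noncomputable def opNorm {𝕜 : Type*} [RCLike 𝕜] {n : ℕ}
    (A : Matrix (Fin n) (Fin n) 𝕜) : ℝ :=
  ‖Matrix.toEuclideanCLM (𝕜 := 𝕜) A‖

/-- The matrix absolute value `|M| = (Mᴴ M)^(1/2)`. -/
noncomputable def matAbs {𝕜 : Type*} [RCLike 𝕜] {n : ℕ}
    (A : Matrix (Fin n) (Fin n) 𝕜) : Matrix (Fin n) (Fin n) 𝕜 :=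
  (Matrix.posSemidef_conjTranspose_mul_self A).1.eigenvectorUnitary.1 *
    Matrix.diagonal ((↑) ∘ Real.sqrt ∘ (Matrix.posSemidef_conjTranspose_mul_self A).1.eigenvalues) *
    (star (Matrix.posSemidef_conjTranspose_mul_self A).1.eigenvectorUnitary : Matrix (Fin n) (Fin n) 𝕜)

/-- The Ky Fan `k`-norm: the sum of the `k` largest singular values. -/
noncomputable def kyFanNorm {𝕜 : Type*} [RCLike 𝕜] {n : ℕ} (k : ℕ)
    (A : Matrix (Fin n) (Fin n) 𝕜) : ℝ :=
  ∑ j ∈ Finset.univ.filter (fun j : Fin n => (j : ℕ) < k), eigValsDown (matAbs A) j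


open Matrix
open scoped ComplexOrder

namespace Stmt15Aux

variable {n : ℕ}

lemma star_mul_self_eq (z : ℂ) : star z * z = ((‖z‖^2 : ℝ) : ℂ) := by
  rw [Complex.star_def, mul_comm, Complex.mul_conj, Complex.normSq_eq_norm_sq]

lemma dot_self_eq (v : Fin n → ℂ) : star v ⬝ᵥ v = ((∑ i, ‖v i‖^2 : ℝ) : ℂ) := by
  simp only [dotProduct, Pi.star_apply, star_mul_self_eq]
  push_cast
  rfl

lemma star_dot_mulVec (U : Matrix (Fin n) (Fin n) ℂ) (x y : Fin n → ℂ) :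
    star x ⬝ᵥ (U *ᵥ y) = star (star U *ᵥ x) ⬝ᵥ y := by
  rw [star_mulVec, dotProduct_mulVec, star_eq_conjTranspose, conjTranspose_conjTranspose]

lemma form_repr (U : Matrix (Fin n) (Fin n) ℂ) (d : Fin n → ℝ) (x : Fin n → ℂ) :
    star x ⬝ᵥ ((U * diagonal (fun i => (d i : ℂ)) * star U) *ᵥ x)
      = ((∑ i, d i * ‖(star U *ᵥ x) i‖^2 : ℝ) : ℂ) := by
  have h1 : (U * diagonal (fun i => (d i : ℂ)) * star U) *ᵥ x
      = U *ᵥ (diagonal (fun i => (d i : ℂ)) *ᵥ (star U *ᵥ x)) := by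
    rw [mulVec_mulVec, mulVec_mulVec]
  rw [h1, star_dot_mulVec]
  set c := star U *ᵥ x with hc
  simp only [dotProduct, Pi.star_apply, mulVec_diagonal]
  have h2 : ∀ i, star (c i) * ((d i : ℂ) * c i) = (d i : ℂ) * ((‖c i‖^2 : ℝ) : ℂ) := fun i => by
    rw [mul_left_comm, star_mul_self_eq]
  simp only [h2]
  push_cast
  rfl

lemma form_re {P U : Matrix (Fin n) (Fin n) ℂ} {d : Fin n → ℝ}
    (hPU : P = U * diagonal (fun i => (d i : ℂ)) * star U) (x : Fin n → ℂ) :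
    (star x ⬝ᵥ P *ᵥ x).re = ∑ i, d i * ‖(star U *ᵥ x) i‖^2 := by
  rw [hPU, form_repr, Complex.ofReal_re]

lemma sum_sq_mulVec_star {U : Matrix (Fin n) (Fin n) ℂ} (hU : U * star U = 1) (x : Fin n → ℂ) :
    ∑ i, ‖(star U *ᵥ x) i‖^2 = ∑ i, ‖x i‖^2 := by
  have h : star (star U *ᵥ x) ⬝ᵥ (star U *ᵥ x) = star x ⬝ᵥ x := by
    rw [← star_dot_mulVec, mulVec_mulVec, hU, one_mulVec]
  rw [dot_self_eq, dot_self_eq] at h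
  exact_mod_cast h

lemma sum_mul_sq_ge {d : Fin n → ℝ} {c : Fin n → ℂ} {I : Finset (Fin n)} {θ : ℝ}
    (hsupp : ∀ i ∉ I, c i = 0) (hd : ∀ i ∈ I, θ ≤ d i) :
    θ * ∑ i, ‖c i‖^2 ≤ ∑ i, d i * ‖c i‖^2 := by
  have e1 : ∑ i, ‖c i‖^2 = ∑ i ∈ I, ‖c i‖^2 :=
    (Finset.sum_subset I.subset_univ (fun i _ hi => by simp [hsupp i hi])).symm
  have e2 : ∑ i, d i * ‖c i‖^2 = ∑ i ∈ I, d i * ‖c i‖^2 :=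
    (Finset.sum_subset I.subset_univ (fun i _ hi => by simp [hsupp i hi])).symm
  rw [e1, e2, Finset.mul_sum]
  exact Finset.sum_le_sum fun i hi => mul_le_mul_of_nonneg_right (hd i hi) (by positivity)

lemma sum_mul_sq_le {d : Fin n → ℝ} {c : Fin n → ℂ} {I : Finset (Fin n)} {θ : ℝ}
    (hsupp : ∀ i ∉ I, c i = 0) (hd : ∀ i ∈ I, d i ≤ θ) :
    ∑ i, d i * ‖c i‖^2 ≤ θ * ∑ i, ‖c i‖^2 := by
  have e1 : ∑ i, ‖c i‖^2 = ∑ i ∈ I, ‖c i‖^2 :=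
    (Finset.sum_subset I.subset_univ (fun i _ hi => by simp [hsupp i hi])).symm
  have e2 : ∑ i, d i * ‖c i‖^2 = ∑ i ∈ I, d i * ‖c i‖^2 :=
    (Finset.sum_subset I.subset_univ (fun i _ hi => by simp [hsupp i hi])).symm
  rw [e1, e2, Finset.mul_sum]
  exact Finset.sum_le_sum fun i hi => mul_le_mul_of_nonneg_right (hd i hi) (by positivity)

lemma exists_constrained_vec (U V : Matrix (Fin n) (Fin n) ℂ) (I J : Finset (Fin n))
    (h : n < I.card + J.card) :
    ∃ x : Fin n → ℂ, x ≠ 0 ∧ (∀ i ∉ I, (U *ᵥ x) i = 0) ∧ (∀ j ∉ J, (V *ᵥ x) j = 0) := by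
  classical
  let L : (Fin n → ℂ) →ₗ[ℂ] ((↥(Iᶜ) → ℂ) × (↥(Jᶜ) → ℂ)) :=
    { toFun := fun x => (fun i => (U *ᵥ x) i.1, fun j => (V *ᵥ x) j.1)
      map_add' := fun x y => by ext i <;> simp [Matrix.mulVec_add]
      map_smul' := fun m x => by ext i <;> simp [Matrix.mulVec_smul] }
  have h1 := LinearMap.finrank_range_add_finrank_ker L
  have h2 := Submodule.finrank_le (LinearMap.range L)
  have hcod : Module.finrank ℂ ((↥(Iᶜ) → ℂ) × (↥(Jᶜ) → ℂ)) = (n - I.card) + (n - J.card) := by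
    rw [Module.finrank_prod, Module.finrank_pi, Module.finrank_pi, Fintype.card_coe,
      Fintype.card_coe, Finset.card_compl, Finset.card_compl, Fintype.card_fin]
  have hdom : Module.finrank ℂ (Fin n → ℂ) = n := by
    rw [Module.finrank_pi, Fintype.card_fin]
  have hI : I.card ≤ n := by simpa using I.card_le_univ
  have hJ : J.card ≤ n := by simpa using J.card_le_univ
  have h3 : 0 < Module.finrank ℂ (LinearMap.ker L) := by
    rw [hdom] at h1; rw [hcod] at h2; omega
  have h4 : Nontrivial (LinearMap.ker L) := Module.finrank_pos_iff.mp h3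
  obtain ⟨⟨x, hx⟩, hne⟩ := exists_ne (0 : LinearMap.ker L)
  refine ⟨x, by simpa [Submodule.mk_eq_zero] using hne, fun i hi => ?_, fun j hj => ?_⟩
  · exact congrFun (congrArg Prod.fst hx) ⟨i, Finset.mem_compl.mpr hi⟩
  · exact congrFun (congrArg Prod.snd hx) ⟨j, Finset.mem_compl.mpr hj⟩

lemma exists_unit_vec (U V : Matrix (Fin n) (Fin n) ℂ) (I J : Finset (Fin n))
    (h : n < I.card + J.card) :
    ∃ x : Fin n → ℂ, (∑ i, ‖x i‖^2 = 1) ∧ (∀ i ∉ I, (U *ᵥ x) i = 0) ∧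
      (∀ j ∉ J, (V *ᵥ x) j = 0) := by
  obtain ⟨x₀, hne, h1, h2⟩ := exists_constrained_vec U V I J h
  set s := ∑ i, ‖x₀ i‖^2 with hs
  have hspos : 0 < s := by
    obtain ⟨i, hi⟩ := Function.ne_iff.mp hne
    exact Finset.sum_pos' (fun j _ => by positivity) ⟨i, Finset.mem_univ i, pow_pos (norm_pos_iff.mpr hi) 2⟩
  set r : ℝ := (Real.sqrt s)⁻¹ with hr
  have hrnn : 0 ≤ r := by positivity
  refine ⟨(r : ℂ) • x₀, ?_, fun i hi => ?_, fun j hj => ?_⟩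
  · have hterm : ∀ i, ‖((r : ℂ) • x₀) i‖^2 = r^2 * ‖x₀ i‖^2 := fun i => by
      rw [Pi.smul_apply, norm_smul, Complex.norm_real, Real.norm_eq_abs, abs_of_nonneg hrnn]
      ring
    rw [Finset.sum_congr rfl (fun i _ => hterm i), ← Finset.mul_sum, ← hs, hr, inv_pow,
      Real.sq_sqrt hspos.le, inv_mul_cancel₀ hspos.ne']
  · rw [mulVec_smul, Pi.smul_apply, h1 i hi, smul_zero]
  · rw [mulVec_smul, Pi.smul_apply, h2 j hj, smul_zero]

end Stmt15Aux
namespace Stmt15Aux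

lemma g_le_id {g : ℝ → ℝ} (hg_conc : ConcaveOn ℝ (Set.Ici (0:ℝ)) g)
    (hg0 : g 0 = 0) (hg1 : g 1 = 1) {v : ℝ} (hv : 1 ≤ v) : g v ≤ v := by
  rcases eq_or_lt_of_le hv with h | h
  · rw [← h, hg1]
  · have hv0 : (0:ℝ) < v := by linarith
    have key := hg_conc.2 (Set.mem_Ici.mpr (le_refl (0:ℝ))) (Set.mem_Ici.mpr hv0.le)
      (show (0:ℝ) ≤ 1 - 1/v by rw [sub_nonneg, div_le_one hv0]; linarith)
      (show (0:ℝ) ≤ 1/v by positivity) (by ring)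
    rw [hg0] at key
    simp only [smul_eq_mul, mul_zero, zero_add] at key
    rw [one_div, inv_mul_cancel₀ hv0.ne', hg1] at key
    rw [← div_eq_inv_mul, div_le_one hv0] at key
    exact key

lemma id_le_g {g : ℝ → ℝ} (hg_conc : ConcaveOn ℝ (Set.Ici (0:ℝ)) g)
    (hg0 : g 0 = 0) (hg1 : g 1 = 1) {u : ℝ} (hu : 0 ≤ u) (hu1 : u ≤ 1) : u ≤ g u := by
  have key := hg_conc.2 (Set.mem_Ici.mpr (le_refl (0:ℝ)))
    (Set.mem_Ici.mpr (by norm_num : (0:ℝ) ≤ 1))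
    (show (0:ℝ) ≤ 1 - u by linarith) hu (by ring)
  rw [hg0, hg1] at key
  simp only [smul_eq_mul, mul_zero, mul_one, zero_add] at key
  exact key

lemma chord_le {g : ℝ → ℝ} (hg_conc : ConcaveOn ℝ (Set.Ici (0:ℝ)) g)
    (hg0 : g 0 = 0) (hg1 : g 1 = 1) {u v : ℝ} (hu : 0 ≤ u) (huv : u ≤ v) (hv : 1 ≤ v) :
    g v - g u ≤ v - u := by
  have hgv := g_le_id hg_conc hg0 hg1 hv
  rcases le_or_gt u 1 with h1 | h1
  · have := id_le_g hg_conc hg0 hg1 hu h1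
    linarith
  · rcases eq_or_lt_of_le huv with rfl | huv'
    · simp
    · have hv1 : (1:ℝ) < v := lt_trans h1 huv'
      set t : ℝ := (v - u)/(v - 1) with ht
      have htpos : 0 ≤ t := div_nonneg (by linarith) (by linarith)
      have ht1 : t ≤ 1 := by rw [ht, div_le_one (by linarith)]; linarith
      have hteq : t * (v - 1) = v - u := by
        rw [ht, div_mul_cancel₀]; linarith
      have key := hg_conc.2 (Set.mem_Ici.mpr (by norm_num : (0:ℝ) ≤ 1))
        (Set.mem_Ici.mpr (by linarith : (0:ℝ) ≤ v)) htpos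
        (show (0:ℝ) ≤ 1 - t by linarith) (by ring)
      rw [hg1] at key
      simp only [smul_eq_mul, mul_one] at key
      have harg : t + (1 - t) * v = u := by nlinarith [hteq]
      rw [harg] at key
      nlinarith [mul_nonneg htpos (sub_nonneg.mpr hgv)]

end Stmt15Aux
namespace Stmt15Aux

variable {n : ℕ}

lemma herm_conj (U : Matrix (Fin n) (Fin n) ℂ) (d : Fin n → ℝ) :
    (U * diagonal (fun i => (d i : ℂ)) * star U).IsHermitian := by
  rw [star_eq_conjTranspose]
  refine isHermitian_mul_mul_conjTranspose U ?_
  rw [Matrix.IsHermitian, diagonal_conjTranspose]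
  have h : (star fun i => ((d i : ℝ) : ℂ)) = fun i => ((d i : ℝ) : ℂ) := by
    funext i
    simp only [Pi.star_apply]
    exact Complex.conj_ofReal (d i)
  rw [h]

lemma matFun_eq {A : Matrix (Fin n) (Fin n) ℂ} (hA : A.IsHermitian) (g : ℝ → ℝ) :
    matFun g A = (hA.eigenvectorUnitary : Matrix (Fin n) (Fin n) ℂ) *
      diagonal (fun i => ((g (hA.eigenvalues i) : ℝ) : ℂ)) *
      star (hA.eigenvectorUnitary : Matrix (Fin n) (Fin n) ℂ) := by
  unfold matFun
  rw [dif_pos hA]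
  rfl

lemma spectral_theorem' {P : Matrix (Fin n) (Fin n) ℂ} (hP : P.IsHermitian) :
    P = (hP.eigenvectorUnitary : Matrix (Fin n) (Fin n) ℂ) *
      diagonal (fun i => ((hP.eigenvalues i : ℝ) : ℂ)) *
      star (hP.eigenvectorUnitary : Matrix (Fin n) (Fin n) ℂ) := hP.spectral_theorem

lemma matFun_isHermitian {A : Matrix (Fin n) (Fin n) ℂ} (hA : A.IsHermitian) (g : ℝ → ℝ) :
    (matFun g A).IsHermitian := by
  rw [matFun_eq hA g]; exact herm_conj _ _

lemma eigValsDown_eq {P : Matrix (Fin n) (Fin n) ℂ} (hP : P.IsHermitian) (k : Fin n) :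
    eigValsDown P k = hP.eigenvalues (Tuple.sort hP.eigenvalues k.rev) := by
  unfold eigValsDown
  rw [dif_pos hP]
  rfl

lemma unitary_mul_star {P : Matrix (Fin n) (Fin n) ℂ} (hP : P.IsHermitian) :
    (hP.eigenvectorUnitary : Matrix (Fin n) (Fin n) ℂ) *
      star (hP.eigenvectorUnitary : Matrix (Fin n) (Fin n) ℂ) = 1 :=
  mem_unitaryGroup_iff.mp hP.eigenvectorUnitary.2

lemma eig_le_form {P : Matrix (Fin n) (Fin n) ℂ} (hP : P.IsHermitian) (k : Fin n)
    (x : Fin n → ℂ) (hx : ∑ i, ‖x i‖^2 = 1)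
    (hsupp : ∀ i ∉ (Finset.Ici k.rev).image (Tuple.sort hP.eigenvalues),
      ((star (hP.eigenvectorUnitary : Matrix (Fin n) (Fin n) ℂ)) *ᵥ x) i = 0) :
    eigValsDown P k ≤ (star x ⬝ᵥ P *ᵥ x).re := by
  rw [eigValsDown_eq hP k, form_re (spectral_theorem' hP) x]
  have hsum := sum_sq_mulVec_star (unitary_mul_star hP) x
  have hdd : ∀ i ∈ (Finset.Ici k.rev).image (Tuple.sort hP.eigenvalues),
      hP.eigenvalues (Tuple.sort hP.eigenvalues k.rev) ≤ hP.eigenvalues i := by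
    intro i hi
    obtain ⟨j, hj, rfl⟩ := Finset.mem_image.mp hi
    exact Tuple.monotone_sort hP.eigenvalues (Finset.mem_Ici.mp hj)
  have hbd := sum_mul_sq_ge (d := hP.eigenvalues) hsupp hdd
  rw [hsum, hx, mul_one] at hbd
  exact hbd

lemma form_le_eig {P : Matrix (Fin n) (Fin n) ℂ} (hP : P.IsHermitian) (k : Fin n)
    (x : Fin n → ℂ) (hx : ∑ i, ‖x i‖^2 = 1)
    (hsupp : ∀ i ∉ (Finset.Iic k.rev).image (Tuple.sort hP.eigenvalues),
      ((star (hP.eigenvectorUnitary : Matrix (Fin n) (Fin n) ℂ)) *ᵥ x) i = 0) :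
    (star x ⬝ᵥ P *ᵥ x).re ≤ eigValsDown P k := by
  rw [eigValsDown_eq hP k, form_re (spectral_theorem' hP) x]
  have hsum := sum_sq_mulVec_star (unitary_mul_star hP) x
  have hdd : ∀ i ∈ (Finset.Iic k.rev).image (Tuple.sort hP.eigenvalues),
      hP.eigenvalues i ≤ hP.eigenvalues (Tuple.sort hP.eigenvalues k.rev) := by
    intro i hi
    obtain ⟨j, hj, rfl⟩ := Finset.mem_image.mp hi
    exact Tuple.monotone_sort hP.eigenvalues (Finset.mem_Iic.mp hj)
  have hbd := sum_mul_sq_le (d := hP.eigenvalues) hsupp hdd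
  rw [hsum, hx, mul_one] at hbd
  exact hbd

end Stmt15Aux
/-- key step in the proof of Proposition `prop:ggc`: for a monotonically
increasing concave `g` on `[0,∞)` with `g 0 = 0` and `g 1 = 1`, and PSD `A, B` with
`B ≤ I ≤ A`, one has `λ_k↓(g(A) - B) ≤ λ_k↓(g(A - B))` for every `k`. -/
theorem stmt15 {n : ℕ} (A B : Matrix (Fin n) (Fin n) ℂ)
    (hA : A.PosSemidef) (hB : B.PosSemidef)
    (hB1 : ((1 : Matrix (Fin n) (Fin n) ℂ) - B).PosSemidef)
    (hA1 : (A - 1).PosSemidef)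
    (g : ℝ → ℝ) (hg_mono : MonotoneOn g (Set.Ici (0 : ℝ)))
    (hg_conc : ConcaveOn ℝ (Set.Ici (0 : ℝ)) g)
    (hg0 : g 0 = 0) (hg1 : g 1 = 1)
    (k : Fin n) :
    eigValsDown (matFun g A - B) k ≤ eigValsDown (matFun g (A - B)) k := by
  classical
  have hAh : A.IsHermitian := hA.1
  have hBh : B.IsHermitian := hB.1
  have hZ : (A - B).IsHermitian := hAh.sub hBh
  have hZpsd : (A - B).PosSemidef := by
    have h := hA1.add hB1
    rwa [sub_add_sub_cancel] at h
  have hGA : (matFun g A).IsHermitian := Stmt15Aux.matFun_isHermitian hAh g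
  have hM : (matFun g A - B).IsHermitian := hGA.sub hBh
  have hGZ : (matFun g (A - B)).IsHermitian := Stmt15Aux.matFun_isHermitian hZ g
  set θ : ℝ := eigValsDown (A - B) k with hθdef
  have hθeig : θ = hZ.eigenvalues (Tuple.sort hZ.eigenvalues k.rev) :=
    Stmt15Aux.eigValsDown_eq hZ k
  have hθ0 : 0 ≤ θ := by rw [hθeig]; exact hZpsd.eigenvalues_nonneg _
  have keyA : eigValsDown (matFun g A - B) k ≤ g θ := by
    obtain ⟨x, hx1, hsuppM, hsuppZ⟩ := Stmt15Aux.exists_unit_vec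
      (star (hM.eigenvectorUnitary : Matrix (Fin n) (Fin n) ℂ))
      (star (hZ.eigenvectorUnitary : Matrix (Fin n) (Fin n) ℂ))
      ((Finset.Ici k.rev).image (Tuple.sort hM.eigenvalues))
      ((Finset.Iic k.rev).image (Tuple.sort hZ.eigenvalues))
      (by rw [Finset.card_image_of_injective _ (Equiv.injective _),
              Finset.card_image_of_injective _ (Equiv.injective _),
              Fin.card_Ici, Fin.card_Iic]
          have := k.rev.isLt; omega)
    have hUA := Stmt15Aux.unitary_mul_star hAh
    have hpsum : ∑ i, ‖((star (hAh.eigenvectorUnitary : Matrix (Fin n) (Fin n) ℂ)) *ᵥ x) i‖^2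
        = 1 := by
      rw [Stmt15Aux.sum_sq_mulVec_star hUA x, hx1]
    have ha_eq : (star x ⬝ᵥ A *ᵥ x).re
        = ∑ i, hAh.eigenvalues i *
            ‖((star (hAh.eigenvectorUnitary : Matrix (Fin n) (Fin n) ℂ)) *ᵥ x) i‖^2 :=
      Stmt15Aux.form_re (Stmt15Aux.spectral_theorem' hAh) x
    have hGA_eq : (star x ⬝ᵥ (matFun g A) *ᵥ x).re
        = ∑ i, g (hAh.eigenvalues i) *
            ‖((star (hAh.eigenvectorUnitary : Matrix (Fin n) (Fin n) ℂ)) *ᵥ x) i‖^2 :=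
      Stmt15Aux.form_re (Stmt15Aux.matFun_eq hAh g) x
    have hjensen : (star x ⬝ᵥ (matFun g A) *ᵥ x).re ≤ g ((star x ⬝ᵥ A *ᵥ x).re) := by
      have hj := hg_conc.le_map_sum (t := Finset.univ)
        (w := fun i => ‖((star (hAh.eigenvectorUnitary : Matrix (Fin n) (Fin n) ℂ)) *ᵥ x) i‖^2)
        (p := hAh.eigenvalues)
        (fun i _ => by positivity) hpsum
        (fun i _ => Set.mem_Ici.mpr (hA.eigenvalues_nonneg i))
      rw [hGA_eq, ha_eq]
      simpa [smul_eq_mul, mul_comm] using hj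
    have hb0 : 0 ≤ (star x ⬝ᵥ B *ᵥ x).re := by
      have h := hB.dotProduct_mulVec_nonneg x
      rw [Complex.le_def] at h
      simpa using h.1
    have hxx : (star x ⬝ᵥ x : ℂ).re = 1 := by
      rw [Stmt15Aux.dot_self_eq, Complex.ofReal_re, hx1]
    have ha1 : 1 ≤ (star x ⬝ᵥ A *ᵥ x).re := by
      have h := hA1.dotProduct_mulVec_nonneg x
      rw [Complex.le_def] at h
      have h2 := h.1
      rw [Complex.zero_re, sub_mulVec, one_mulVec, dotProduct_sub, Complex.sub_re, hxx] at h2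
      linarith
    have hzsplit : (star x ⬝ᵥ (A - B) *ᵥ x).re
        = (star x ⬝ᵥ A *ᵥ x).re - (star x ⬝ᵥ B *ᵥ x).re := by
      rw [sub_mulVec, dotProduct_sub, Complex.sub_re]
    have hz0 : 0 ≤ (star x ⬝ᵥ (A - B) *ᵥ x).re := by
      have h := hZpsd.dotProduct_mulVec_nonneg x
      rw [Complex.le_def] at h
      simpa using h.1
    have hzθ : (star x ⬝ᵥ (A - B) *ᵥ x).re ≤ θ := Stmt15Aux.form_le_eig hZ k x hx1 hsuppZ
    have hMle : eigValsDown (matFun g A - B) k ≤ (star x ⬝ᵥ (matFun g A - B) *ᵥ x).re :=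
      Stmt15Aux.eig_le_form hM k x hx1 hsuppM
    have hMsplit : (star x ⬝ᵥ (matFun g A - B) *ᵥ x).re
        = (star x ⬝ᵥ (matFun g A) *ᵥ x).re - (star x ⬝ᵥ B *ᵥ x).re := by
      rw [sub_mulVec, dotProduct_sub, Complex.sub_re]
    have hchord : g ((star x ⬝ᵥ A *ᵥ x).re) - g ((star x ⬝ᵥ (A - B) *ᵥ x).re)
        ≤ (star x ⬝ᵥ A *ᵥ x).re - (star x ⬝ᵥ (A - B) *ᵥ x).re :=
      Stmt15Aux.chord_le hg_conc hg0 hg1 hz0 (by linarith) ha1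
    have hmono : g ((star x ⬝ᵥ (A - B) *ᵥ x).re) ≤ g θ :=
      hg_mono (Set.mem_Ici.mpr hz0) (Set.mem_Ici.mpr (le_trans hz0 hzθ)) hzθ
    linarith
  have keyB : g θ ≤ eigValsDown (matFun g (A - B)) k := by
    obtain ⟨y, hy1, hsuppZ2, hsuppG⟩ := Stmt15Aux.exists_unit_vec
      (star (hZ.eigenvectorUnitary : Matrix (Fin n) (Fin n) ℂ))
      (star (hGZ.eigenvectorUnitary : Matrix (Fin n) (Fin n) ℂ))
      ((Finset.Ici k.rev).image (Tuple.sort hZ.eigenvalues))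
      ((Finset.Iic k.rev).image (Tuple.sort hGZ.eigenvalues))
      (by rw [Finset.card_image_of_injective _ (Equiv.injective _),
              Finset.card_image_of_injective _ (Equiv.injective _),
              Fin.card_Ici, Fin.card_Iic]
          have := k.rev.isLt; omega)
    have hupper : (star y ⬝ᵥ (matFun g (A - B)) *ᵥ y).re ≤ eigValsDown (matFun g (A - B)) k :=
      Stmt15Aux.form_le_eig hGZ k y hy1 hsuppG
    have hlow : g θ ≤ (star y ⬝ᵥ (matFun g (A - B)) *ᵥ y).re := by
      rw [Stmt15Aux.form_re (Stmt15Aux.matFun_eq hZ g) y]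
      have hcs : ∑ i, ‖((star (hZ.eigenvectorUnitary : Matrix (Fin n) (Fin n) ℂ)) *ᵥ y) i‖^2
          = 1 := by
        rw [Stmt15Aux.sum_sq_mulVec_star (Stmt15Aux.unitary_mul_star hZ) y, hy1]
      have hdd : ∀ i ∈ (Finset.Ici k.rev).image (Tuple.sort hZ.eigenvalues),
          g θ ≤ g (hZ.eigenvalues i) := by
        intro i hi
        obtain ⟨j, hj, rfl⟩ := Finset.mem_image.mp hi
        have h1 : θ ≤ hZ.eigenvalues (Tuple.sort hZ.eigenvalues j) := by
          rw [hθeig]; exact Tuple.monotone_sort hZ.eigenvalues (Finset.mem_Ici.mp hj)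
        exact hg_mono (Set.mem_Ici.mpr hθ0) (Set.mem_Ici.mpr (le_trans hθ0 h1)) h1
      have hbd := Stmt15Aux.sum_mul_sq_ge (d := fun i => g (hZ.eigenvalues i)) hsuppZ2 hdd
      rw [hcs, mul_one] at hbd
      exact hbd
    linarith
  linarith
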